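/- (Rate with one nonsmooth term, regime p3 with L2 = ∞.) Let f1 ∈ F_{μ1,L1} with 0 < L1 < ∞ and f2 ∈ F_{μ2,∞}, with μ1 > −μ2 > 0. Let F := f1 − f2, let N ≥ 1, and let x⁰, …, x^N be a DCA sequence with subgradients g1^k ∈ ∂f1(x^k), g2^k ∈ ∂f2(x^k). Then (1/2)·min_{0 ≤ k ≤ N} ‖g1^k − g2^k‖² ≤ (F(x⁰) − F(x^N)) / (p·N), where p = (1/L1)·(1/μ1 + 1/μ2) / (1/μ1 + 1/μ2 − 1/L1). -/

import Mathlib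

open RealInnerProductSpace

variable {H : Type*} [NormedAddCommGroup H] [InnerProductSpace ℝ H]

/-- `f` has lower curvature `μ`, i.e. `f - (μ/2)‖·‖²` is convex. -/
def HasLowerCurvature (μ : ℝ) (f : H → ℝ) : Prop :=
  ConvexOn ℝ Set.univ fun x => f x - μ / 2 * ‖x‖ ^ 2

/-- `f` has upper curvature `L`, i.e. `(L/2)‖·‖² - f` is convex. -/
def HasUpperCurvature (L : ℝ) (f : H → ℝ) : Prop :=
  ConvexOn ℝ Set.univ fun x => L / 2 * ‖x‖ ^ 2 - f x

/-- `g` is a subgradient of `f` (of lower curvature `μ`) at `x`. -/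
def IsSubgradient (μ : ℝ) (f : H → ℝ) (x g : H) : Prop :=
  ∀ y, f y ≥ f x + ⟪g, y - x⟫ + μ / 2 * ‖y - x‖ ^ 2


lemma norm_smul_sq' (c : ℝ) (v : H) : ‖c • v‖ ^ 2 = c ^ 2 * ‖v‖ ^ 2 := by
  rw [norm_smul, Real.norm_eq_abs, mul_pow, sq_abs]

lemma upper_bound {L mu : ℝ} {f : H → ℝ} (hup : HasUpperCurvature L f) {x u : H}
    (hsub : IsSubgradient mu f x u) (z : H) :
    f z ≤ f x + ⟪u, z - x⟫ + L / 2 * ‖z - x‖ ^ 2 := by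
  set d := z - x with hd
  have hz : z = x + d := by rw [hd]; abel
  have main : ∀ t : ℝ, 0 < t → t ≤ 1 →
      f z ≤ f x + ⟪u, d⟫ + L / 2 * ‖d‖ ^ 2 + t * ((L - mu) / 2 * ‖d‖ ^ 2) := by
    intro t ht0 ht1
    have h1t : (0:ℝ) < 1 + t := by linarith
    have hcomb : (t/(1+t)) • (x + d) + (1/(1+t)) • (x - t • d) = x := by
      match_scalars <;> field_simp <;> ring
    have hconv := hup.2 (Set.mem_univ (x + d)) (Set.mem_univ (x - t • d))
      (by positivity : (0:ℝ) ≤ t/(1+t)) (by positivity : (0:ℝ) ≤ 1/(1+t))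
      (by field_simp; ring)
    rw [hcomb] at hconv
    simp only [smul_eq_mul] at hconv
    have hAB : (t/(1+t)) * (L / 2 * ‖x + d‖ ^ 2 - f (x + d)) + (1/(1+t)) * (L / 2 * ‖x - t • d‖ ^ 2 - f (x - t • d))
        = ((t * (L / 2 * ‖x + d‖ ^ 2 - f (x + d)) + (L / 2 * ‖x - t • d‖ ^ 2 - f (x - t • d))) / (1 + t)) := by
      field_simp [ne_of_gt h1t]
    rw [hAB, le_div_iff₀ h1t] at hconv
    have hsub1 := hsub (x - t • d)
    have e1 : ‖x + d‖ ^ 2 = ‖x‖ ^ 2 + 2 * ⟪x, d⟫ + ‖d‖ ^ 2 := norm_add_sq_real x d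
    have e2 : ‖x - t • d‖ ^ 2 = ‖x‖ ^ 2 - 2 * (t * ⟪x, d⟫) + t ^ 2 * ‖d‖ ^ 2 := by
      rw [norm_sub_sq_real, real_inner_smul_right, norm_smul_sq']
    have e3 : ⟪u, (x - t • d) - x⟫ = -(t * ⟪u, d⟫) := by
      have : (x - t • d) - x = -(t • d) := by abel
      rw [this, inner_neg_right, real_inner_smul_right]
    have e4 : ‖(x - t • d) - x‖ ^ 2 = t ^ 2 * ‖d‖ ^ 2 := by
      have : (x - t • d) - x = -(t • d) := by abel
      rw [this, norm_neg, norm_smul_sq']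
    rw [e1, e2] at hconv
    rw [e3, e4] at hsub1
    rw [hz]
    nlinarith [hconv, hsub1, mul_pos ht0 ht0]
  apply le_of_forall_pos_le_add
  intro ε hε
  set C := (L - mu) / 2 * ‖d‖ ^ 2 with hC
  rcases le_or_gt C 0 with hC0 | hC0
  · have := main 1 one_pos le_rfl
    linarith
  · set t := min 1 (ε / (2 * C)) with htdef
    have ht0 : 0 < t := lt_min one_pos (by positivity)
    have ht1 : t ≤ 1 := min_le_left _ _
    have htC : t * C ≤ ε := by
      have h2 : t ≤ ε / (2 * C) := min_le_right _ _
      have := mul_le_mul_of_nonneg_right h2 (le_of_lt hC0)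
      rw [div_mul_eq_mul_div] at this
      have h3 : ε * C / (2 * C) = ε / 2 := by
        field_simp
      rw [h3] at this
      linarith
    have := main t ht0 ht1
    linarith


set_option maxHeartbeats 1000000 in
lemma step_bound (mu1 mu2 L1 : ℝ) (hL1 : 0 < L1) (hmu1 : 0 < mu1) (hmu2 : mu2 < 0)
    (hm : 0 < mu1 + mu2) (hK : mu1 ≤ L1)
    (f1 f2 : H → ℝ) (hup : HasUpperCurvature L1 f1)
    (X Y u g : H)
    (hu : IsSubgradient mu1 f1 X u)
    (hgy : IsSubgradient mu1 f1 Y g)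
    (hgx : IsSubgradient mu2 f2 X g) :
    (mu1 + mu2) / (2 * (L1 * (mu1 + mu2) - mu1 * mu2)) * ‖u - g‖ ^ 2 ≤
      (f1 X - f2 X) - (f1 Y - f2 Y) := by
  set T : ℝ := (f1 X - f2 X) - (f1 Y - f2 Y) with hT
  set D : H := Y - X with hD
  set P : H := u - g with hP
  set w : H := P + mu1 • D with hw
  have hw2exp : ‖w‖ ^ 2 = ‖P‖ ^ 2 + 2 * (mu1 * ⟪P, D⟫) + mu1 ^ 2 * ‖D‖ ^ 2 := by
    rw [hw, norm_add_sq_real, real_inner_smul_right, norm_smul_sq']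
  have key : ∀ s : ℝ, (mu1 + mu2) / 2 * ‖D‖ ^ 2 + ‖w‖ ^ 2 * (s - (L1 - mu1) * s ^ 2 / 2) ≤ T := by
    intro s
    have hA := hgy (X - s • w)
    have hB := upper_bound hup hu (X - s • w)
    have hC := hgx Y
    have e1 : ⟪g, (X - s • w) - Y⟫ = -⟪g, Y - X⟫ - s * ⟪g, w⟫ := by
      have h : (X - s • w) - Y = -(Y - X) - s • w := by abel
      rw [h, inner_sub_right, inner_neg_right, real_inner_smul_right]
    have e2 : ‖(X - s • w) - Y‖ ^ 2 = ‖D‖ ^ 2 + 2 * (s * ⟪D, w⟫) + s ^ 2 * ‖w‖ ^ 2 := by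
      have h : (X - s • w) - Y = -(D + s • w) := by rw [hD]; abel
      rw [h, norm_neg, norm_add_sq_real, real_inner_smul_right, norm_smul_sq']
    have e3 : ⟪u, (X - s • w) - X⟫ = -(s * ⟪u, w⟫) := by
      have h : (X - s • w) - X = -(s • w) := by abel
      rw [h, inner_neg_right, real_inner_smul_right]
    have e4 : ‖(X - s • w) - X‖ ^ 2 = s ^ 2 * ‖w‖ ^ 2 := by
      have h : (X - s • w) - X = -(s • w) := by abel
      rw [h, norm_neg, norm_smul_sq']
    have e7 : ⟪u, w⟫ - ⟪g, w⟫ = ‖P‖ ^ 2 + mu1 * ⟪P, D⟫ := by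
      rw [← inner_sub_left, ← hP, hw, inner_add_right, real_inner_smul_right,
        real_inner_self_eq_norm_sq]
    have e8 : ⟪D, w⟫ = ⟪P, D⟫ + mu1 * ‖D‖ ^ 2 := by
      rw [hw, inner_add_right, real_inner_smul_right, real_inner_self_eq_norm_sq,
        real_inner_comm]
    have e6 : ‖Y - X‖ ^ 2 = ‖D‖ ^ 2 := by rw [hD]
    rw [e1, e2] at hA
    rw [e3, e4] at hB
    rw [e6] at hC
    have heq : s * ⟪u, w⟫ - s * ⟪g, w⟫ + mu1 * (s * ⟪D, w⟫) = s * ‖w‖ ^ 2 := by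
      linear_combination s * e7 + mu1 * s * e8 - s * hw2exp
    linarith [hA, hB, hC, heq]
  have hpden : 0 < L1 * (mu1 + mu2) - mu1 * mu2 := by nlinarith [mul_pos hL1 hm]
  rcases eq_or_lt_of_le hK with hKeq | hKlt
  · -- L1 = mu1 case
    have hw0 : ‖w‖ ^ 2 = 0 := by
      by_contra hne
      have hpos : 0 < ‖w‖ ^ 2 := lt_of_le_of_ne (by positivity) (Ne.symm hne)
      have hks := key ((T - (mu1 + mu2) / 2 * ‖D‖ ^ 2 + 1) / ‖w‖ ^ 2)
      rw [← hKeq] at hks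
      simp only [sub_self, zero_mul, zero_div, sub_zero] at hks
      rw [mul_div_cancel₀ _ (ne_of_gt hpos)] at hks
      linarith
    have hweq : w = 0 :=
      norm_eq_zero.mp ((pow_eq_zero_iff (n := 2) (by norm_num)).mp hw0)
    have hPeq : P = -(mu1 • D) := by
      rw [hw] at hweq
      rw [add_eq_zero_iff_eq_neg] at hweq
      exact hweq
    have ha3 : ‖P‖ ^ 2 = mu1 ^ 2 * ‖D‖ ^ 2 := by
      rw [hPeq, norm_neg, norm_smul_sq']
    have h0 := key 0
    simp only [zero_pow, mul_zero, zero_div, sub_zero, zero_sub, mul_neg, neg_zero,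
      add_zero] at h0
    have h0' : (mu1 + mu2) / 2 * ‖D‖ ^ 2 ≤ T := by nlinarith [key 0]
    rw [ha3, ← hKeq]
    have hden : mu1 * (mu1 + mu2) - mu1 * mu2 = mu1 ^ 2 := by ring
    rw [hden]
    have hrw : (mu1 + mu2) / (2 * mu1 ^ 2) * (mu1 ^ 2 * ‖D‖ ^ 2)
        = (mu1 + mu2) / 2 * ‖D‖ ^ 2 := by
      field_simp
    rw [hrw]
    exact h0'
  · -- mu1 < L1 case
    have hK' : 0 < L1 - mu1 := by linarith
    have h2K : (0:ℝ) < 2 * (L1 - mu1) := by linarith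
    have hcoef : (1 / (L1 - mu1) - (L1 - mu1) * (1 / (L1 - mu1)) ^ 2 / 2)
        = 1 / (2 * (L1 - mu1)) := by
      field_simp
      ring
    have hkey := key (1 / (L1 - mu1))
    rw [hcoef, mul_one_div] at hkey
    have h' : ‖w‖ ^ 2 / (2 * (L1 - mu1)) ≤ T - (mu1 + mu2) / 2 * ‖D‖ ^ 2 := by linarith
    have h'' := (div_le_iff₀ h2K).mp h'
    have hkey2 : (mu1 + mu2) * (L1 - mu1) * ‖D‖ ^ 2
        + (‖P‖ ^ 2 + 2 * (mu1 * ⟪P, D⟫) + mu1 ^ 2 * ‖D‖ ^ 2) ≤ 2 * (L1 - mu1) * T := by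
      rw [← hw2exp]
      nlinarith [h'']
    have hmul := mul_le_mul_of_nonneg_left hkey2 (le_of_lt hpden)
    have hsq : (0:ℝ) ≤ ‖(L1 * (mu1 + mu2) - mu1 * mu2) • D + mu1 • P‖ ^ 2 := by positivity
    have hsqexp : ‖(L1 * (mu1 + mu2) - mu1 * mu2) • D + mu1 • P‖ ^ 2
        = (L1 * (mu1 + mu2) - mu1 * mu2) ^ 2 * ‖D‖ ^ 2
          + 2 * ((L1 * (mu1 + mu2) - mu1 * mu2) * (mu1 * ⟪P, D⟫))
          + mu1 ^ 2 * ‖P‖ ^ 2 := by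
      rw [norm_add_sq_real, real_inner_smul_left, real_inner_smul_right, norm_smul_sq',
        norm_smul_sq', real_inner_comm]
    rw [hsqexp] at hsq
    rw [div_mul_eq_mul_div, div_le_iff₀ (by positivity)]
    have hfin : (L1 - mu1) * ((mu1 + mu2) * ‖P‖ ^ 2)
        ≤ (L1 - mu1) * (T * (2 * (L1 * (mu1 + mu2) - mu1 * mu2))) := by
      linarith [hmul, hsq]
    exact le_of_mul_le_mul_left hfin hK'

/-- rate with one nonsmooth term, regime p3 with `L₂ = ∞`. -/
theorem dca_rate_p3_one_nonsmooth
    (mu1 mu2 L1 : ℝ) (hL1 : 0 < L1) (h1 : -mu2 < mu1) (h2 : 0 < -mu2)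
    (f1 f2 : H → ℝ)
    (h1lo : HasLowerCurvature mu1 f1) (h1up : HasUpperCurvature L1 f1)
    (h2lo : HasLowerCurvature mu2 f2)
    (N : ℕ) (hN : 1 ≤ N) (x g1 g2 : ℕ → H)
    (hg1 : ∀ k ≤ N, IsSubgradient mu1 f1 (x k) (g1 k))
    (hg2 : ∀ k ≤ N, IsSubgradient mu2 f2 (x k) (g2 k))
    (hdca : ∀ k < N, g1 (k + 1) = g2 k) :
    ((1 : ℝ) / 2) * ((Finset.range (N + 1)).inf' (Finset.nonempty_range_iff.mpr (Nat.succ_ne_zero N))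
        fun k => ‖g1 k - g2 k‖ ^ 2) ≤
      ((f1 (x 0) - f2 (x 0)) - (f1 (x N) - f2 (x N))) /
        ((1 / L1) * (1 / mu1 + 1 / mu2) / (1 / mu1 + 1 / mu2 - 1 / L1) * N) := by
  have hmu1 : 0 < mu1 := lt_trans h2 h1
  have hmu2 : mu2 < 0 := by linarith
  have hm : 0 < mu1 + mu2 := by linarith
  have hpden : 0 < L1 * (mu1 + mu2) - mu1 * mu2 := by nlinarith [mul_pos hL1 hm]
  set M : ℝ := (Finset.range (N + 1)).inf'
      (Finset.nonempty_range_iff.mpr (Nat.succ_ne_zero N)) (fun k => ‖g1 k - g2 k‖ ^ 2) with hMdef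
  have hq : (1 / L1) * (1 / mu1 + 1 / mu2) / (1 / mu1 + 1 / mu2 - 1 / L1)
      = (mu1 + mu2) / (L1 * (mu1 + mu2) - mu1 * mu2) := by
    have hmu1ne : mu1 ≠ 0 := ne_of_gt hmu1
    have hmu2ne : mu2 ≠ 0 := ne_of_lt hmu2
    have hL1ne : L1 ≠ 0 := ne_of_gt hL1
    have hDeq : 1 / mu1 + 1 / mu2 - 1 / L1
        = (L1 * (mu1 + mu2) - mu1 * mu2) / (mu1 * mu2 * L1) := by
      field_simp
      ring
    have hDne : 1 / mu1 + 1 / mu2 - 1 / L1 ≠ 0 := by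
      rw [hDeq]
      exact div_ne_zero (ne_of_gt hpden) (mul_ne_zero (mul_ne_zero hmu1ne hmu2ne) hL1ne)
    rw [div_eq_div_iff hDne (ne_of_gt hpden)]
    field_simp
    ring
  rw [hq]
  rcases subsingleton_or_nontrivial H with hss | hnt
  · have hx0N : x N = x 0 := Subsingleton.elim _ _
    have hg0 : g1 0 - g2 0 = (0 : H) := Subsingleton.elim _ _
    have hM0 : M = 0 := by
      apply le_antisymm
      · have h0 : M ≤ ‖g1 0 - g2 0‖ ^ 2 :=
          Finset.inf'_le _ (Finset.mem_range.mpr (Nat.succ_pos N))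
        rw [hg0] at h0
        simpa using h0
      · apply Finset.le_inf'
        intro k _
        positivity
    rw [hM0, hx0N]
    simp
  · have hK : mu1 ≤ L1 := by
      obtain ⟨v, hv⟩ := exists_ne (0 : H)
      have hnv : 0 < ‖v‖ ^ 2 := pow_pos (norm_pos_iff.mpr hv) 2
      have hmid : (1/2 : ℝ) • v + (1/2 : ℝ) • (-v) = (0 : H) := by module
      have c1 := h1lo.2 (Set.mem_univ v) (Set.mem_univ (-v))
        (by norm_num : (0:ℝ) ≤ 1/2) (by norm_num : (0:ℝ) ≤ 1/2) (by norm_num)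
      have c2 := h1up.2 (Set.mem_univ v) (Set.mem_univ (-v))
        (by norm_num : (0:ℝ) ≤ 1/2) (by norm_num : (0:ℝ) ≤ 1/2) (by norm_num)
      rw [hmid] at c1 c2
      simp only [smul_eq_mul, norm_neg, norm_zero] at c1 c2
      nlinarith [c1, c2, hnv]
    have hstep : ∀ k, k < N →
        (mu1 + mu2) / (2 * (L1 * (mu1 + mu2) - mu1 * mu2)) * M
          ≤ (f1 (x k) - f2 (x k)) - (f1 (x (k+1)) - f2 (x (k+1))) := by
      intro k hk
      have hgy : IsSubgradient mu1 f1 (x (k+1)) (g2 k) := by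
        rw [← hdca k hk]
        exact hg1 (k+1) (by omega)
      have hb := step_bound mu1 mu2 L1 hL1 hmu1 hmu2 hm hK f1 f2 h1up
        (x k) (x (k+1)) (g1 k) (g2 k) (hg1 k (by omega)) hgy (hg2 k (by omega))
      have hMle : M ≤ ‖g1 k - g2 k‖ ^ 2 :=
        Finset.inf'_le _ (Finset.mem_range.mpr (by omega))
      have hc : 0 ≤ (mu1 + mu2) / (2 * (L1 * (mu1 + mu2) - mu1 * mu2)) :=
        le_of_lt (div_pos hm (by linarith))
      calc (mu1 + mu2) / (2 * (L1 * (mu1 + mu2) - mu1 * mu2)) * M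
          ≤ (mu1 + mu2) / (2 * (L1 * (mu1 + mu2) - mu1 * mu2)) * ‖g1 k - g2 k‖ ^ 2 :=
            mul_le_mul_of_nonneg_left hMle hc
        _ ≤ _ := hb
    have hsum : ∀ n, n ≤ N → (n : ℝ) * ((mu1 + mu2) / (2 * (L1 * (mu1 + mu2) - mu1 * mu2)) * M)
        ≤ (f1 (x 0) - f2 (x 0)) - (f1 (x n) - f2 (x n)) := by
      intro n
      induction n with
      | zero => intro _; simp
      | succ n ih =>
        intro hn
        have ha := ih (by omega)
        have hb := hstep n (by omega)
        push_cast
        linarith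
    have hfin := hsum N le_rfl
    have hNpos : (0:ℝ) < (N:ℝ) := by exact_mod_cast Nat.pos_of_ne_zero (by omega)
    have hpos : 0 < (mu1 + mu2) / (L1 * (mu1 + mu2) - mu1 * mu2) * (N:ℝ) :=
      mul_pos (div_pos hm hpden) hNpos
    rw [le_div_iff₀ hpos]
    calc 1 / 2 * M * ((mu1 + mu2) / (L1 * (mu1 + mu2) - mu1 * mu2) * (N:ℝ))
        = (N : ℝ) * ((mu1 + mu2) / (2 * (L1 * (mu1 + mu2) - mu1 * mu2)) * M) := by
          field_simp
      _ ≤ _ := hfin
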